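/- Let q = a₁x² + a₂y² + a₃z² + a₄xy + a₅xz + a₆yz ∈ ℂ[x,y,z] with a₁,…,a₆ ∈ ℂ. Suppose that for every b, c ∈ ℂ the binary quadratic form q(b·y + c·z, y, z) ∈ ℂ[y,z] obtained by substituting x = b·y + c·z is the square of a linear form, i.e. equals (α·y + β·z)² for some α, β ∈ ℂ. Then q itself is the square of a linear form: there exist α, β, γ ∈ ℂ with q = (α·x + β·y + γ·z)². -/

import Mathlib

open MvPolynomial

/-- Scalar version: from the six discriminant relations we can build the square root. -/
lemma aux_square_coeffs (a₁ a₂ a₃ a₄ a₅ a₆ : ℂ)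
    (E1 : a₅ ^ 2 = 4 * a₁ * a₃) (E2 : a₄ ^ 2 = 4 * a₁ * a₂)
    (E3 : 2 * a₁ * a₆ = a₄ * a₅) (E6 : a₆ ^ 2 = 4 * a₂ * a₃) :
    ∃ α β γ : ℂ, a₁ = α ^ 2 ∧ a₂ = β ^ 2 ∧ a₃ = γ ^ 2 ∧
      a₄ = 2 * α * β ∧ a₅ = 2 * α * γ ∧ a₆ = 2 * β * γ := by
  by_cases h1 : a₁ = 0
  · have h4 : a₄ = 0 := by
      have : a₄ ^ 2 = 0 := by rw [E2, h1]; ring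
      exact pow_eq_zero_iff (by norm_num) |>.mp this
    have h5 : a₅ = 0 := by
      have : a₅ ^ 2 = 0 := by rw [E1, h1]; ring
      exact pow_eq_zero_iff (by norm_num) |>.mp this
    by_cases h2 : a₂ = 0
    · have h6 : a₆ = 0 := by
        have : a₆ ^ 2 = 0 := by rw [E6, h2]; ring
        exact pow_eq_zero_iff (by norm_num) |>.mp this
      obtain ⟨γ, hγ⟩ := IsAlgClosed.exists_pow_nat_eq a₃ zero_lt_two
      exact ⟨0, 0, γ, by simp [h1], by simp [h2], hγ.symm, by simp [h4], by simp [h5],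
        by simp [h6]⟩
    · obtain ⟨β, hβ⟩ := IsAlgClosed.exists_pow_nat_eq a₂ zero_lt_two
      have hβ0 : β ≠ 0 := by rintro rfl; simp at hβ; exact h2 hβ.symm
      refine ⟨0, β, a₆ / (2 * β), by simp [h1], hβ.symm, ?_, by simp [h4],
        by simp [h5], by field_simp⟩
      field_simp
      linear_combination 4 * a₃ * hβ - E6
  · obtain ⟨α, hα⟩ := IsAlgClosed.exists_pow_nat_eq a₁ zero_lt_two
    have hα0 : α ≠ 0 := by rintro rfl; simp at hα; exact h1 hα.symm
    refine ⟨α, a₄ / (2 * α), a₅ / (2 * α), hα.symm, ?_, ?_, by field_simp, by field_simp, ?_⟩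
    · field_simp
      linear_combination 4 * a₂ * hα - E2
    · field_simp
      linear_combination 4 * a₃ * hα - E1
    · field_simp
      linear_combination 2 * a₆ * hα + E3

/-- The Claim inside Lemma 4.4: if every substitution `x = b·y + c·z` turns the ternary
quadratic `q` into the square of a linear binary form, then `q` itself is the square of a
linear form. Variables: `x = X 0`, `y = X 1`, `z = X 2` in `ℂ[x,y,z]`, and `y = X 0`,
`z = X 1` in `ℂ[y,z]`. -/
theorem ternary_quadratic_square_of_all_sections_square
    (a₁ a₂ a₃ a₄ a₅ a₆ : ℂ)
    (q : MvPolynomial (Fin 3) ℂ)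
    (hq : q = MvPolynomial.C a₁ * X 0 ^ 2 + MvPolynomial.C a₂ * X 1 ^ 2
        + MvPolynomial.C a₃ * X 2 ^ 2 + MvPolynomial.C a₄ * X 0 * X 1
        + MvPolynomial.C a₅ * X 0 * X 2 + MvPolynomial.C a₆ * X 1 * X 2)
    (h : ∀ b c : ℂ, ∃ α β : ℂ,
      (aeval ![MvPolynomial.C b * X 0 + MvPolynomial.C c * X 1,
               (X 0 : MvPolynomial (Fin 2) ℂ), X 1] q)
        = (MvPolynomial.C α * X 0 + MvPolynomial.C β * X 1) ^ 2) :
    ∃ α β γ : ℂ,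
      q = (MvPolynomial.C α * X 0 + MvPolynomial.C β * X 1
            + MvPolynomial.C γ * X 2) ^ 2 := by
  -- Step 1: the scalar discriminant identity for every b, c
  have key : ∀ b c : ℂ, (2 * a₁ * b * c + a₅ * b + a₄ * c + a₆) ^ 2
      = 4 * (a₁ * b ^ 2 + a₄ * b + a₂) * (a₁ * c ^ 2 + a₅ * c + a₃) := by
    intro b c
    obtain ⟨α, β, heq⟩ := h b c
    rw [hq] at heq
    have h10 := congrArg (eval ![(1 : ℂ), 0]) heq
    have h01 := congrArg (eval ![(0 : ℂ), 1]) heq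
    have h11 := congrArg (eval ![(1 : ℂ), 1]) heq
    simp [Matrix.cons_val_zero, Matrix.cons_val_one, Matrix.head_cons] at h10 h01 h11
    linear_combination (2 * a₁ * b * c + a₅ * b + a₄ * c + a₆ + 2 * α * β)
        * (h11 - h10 - h01) - 4 * (a₁ * b ^ 2 + a₄ * b + a₂) * h01 - 4 * β ^ 2 * h10
  -- Step 2: extract the six coefficient relations
  have E1 : a₅ ^ 2 = 4 * a₁ * a₃ := by
    linear_combination (key 1 0 + key (-1) 0) / 2 - key 0 0
  have E2 : a₄ ^ 2 = 4 * a₁ * a₂ := by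
    linear_combination (key 0 1 + key 0 (-1)) / 2 - key 0 0
  have E3 : 2 * a₁ * a₆ = a₄ * a₅ := by
    linear_combination (key 1 1 - key 1 0 - key 0 1 + key 0 0) / 2
  have E6 : a₆ ^ 2 = 4 * a₂ * a₃ := by
    linear_combination key 0 0
  -- Step 3: build the square root
  obtain ⟨α, β, γ, g1, g2, g3, g4, g5, g6⟩ :=
    aux_square_coeffs a₁ a₂ a₃ a₄ a₅ a₆ E1 E2 E3 E6
  refine ⟨α, β, γ, ?_⟩
  rw [hq, g1, g2, g3, g4, g5, g6]
  push_cast [map_mul, map_pow, map_ofNat]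
  ring
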